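/- If A, B, C, D, E, F are all closed under stuttering, then the formula (¬↑A ∨ ○B ∨ C) U (↑D ∧ ○E ∧ F) is closed under stuttering, where ↑X := ¬X ∧ ○X. -/
import Mathlib


def State := String → Bool

def StSeq := ℕ → State

def drop (k : ℕ) (s : StSeq) : StSeq := fun n => s (k + n)

def stutter (s : StSeq) (i : ℕ) : StSeq := fun n => if n ≤ i then s n else s (n - 1)

def CUS (F : StSeq → Prop) : Prop := ∀ (s : StSeq) (i : ℕ), F s ↔ F (stutter s i)

def Var (a : String) : StSeq → Prop := fun s => s 0 a = true

def Not' (F : StSeq → Prop) : StSeq → Prop := fun s => ¬ F s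

def And' (F G : StSeq → Prop) : StSeq → Prop := fun s => F s ∧ G s

def Or' (F G : StSeq → Prop) : StSeq → Prop := fun s => F s ∨ G s

def Imp' (F G : StSeq → Prop) : StSeq → Prop := fun s => F s → G s

def Iff' (F G : StSeq → Prop) : StSeq → Prop := fun s => F s ↔ G s

def Next (F : StSeq → Prop) : StSeq → Prop := fun s => F (drop 1 s)

def Always (F : StSeq → Prop) : StSeq → Prop := fun s => ∀ k, F (drop k s)

def Ev (F : StSeq → Prop) : StSeq → Prop := fun s => ∃ k, F (drop k s)

def Until' (F G : StSeq → Prop) : StSeq → Prop :=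
  fun s => ∃ k, G (drop k s) ∧ ∀ j < k, F (drop j s)

def Up (F : StSeq → Prop) : StSeq → Prop := And' (Not' F) (Next F)

def Down (F : StSeq → Prop) : StSeq → Prop := And' F (Next (Not' F))

def AnyEdge (F : StSeq → Prop) : StSeq → Prop := Or' (Up F) (Down F)

lemma drop_stutter_lt (s : StSeq) (i k : ℕ) (h : k ≤ i) :
    drop k (stutter s i) = stutter (drop k s) (i - k) := by
  funext n
  simp only [drop, stutter]
  by_cases hn : k + n ≤ i
  · have h2 : n ≤ i - k := by omega
    rw [if_pos hn, if_pos h2]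
  · have h2 : ¬ n ≤ i - k := by omega
    have h3 : k + n - 1 = k + (n - 1) := by omega
    rw [if_neg hn, if_neg h2, h3]

lemma drop_stutter_gt (s : StSeq) (i k : ℕ) (h : i < k) :
    drop k (stutter s i) = drop (k - 1) s := by
  funext n
  simp only [drop, stutter]
  have h2 : ¬ k + n ≤ i := by omega
  have h3 : k + n - 1 = k - 1 + n := by omega
  rw [if_neg h2, h3]

lemma drop_one_stutter_zero (t : StSeq) : drop 1 (stutter t 0) = t := by
  funext n
  simp only [drop, stutter]
  have h2 : ¬ 1 + n ≤ 0 := by omega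
  have h3 : 1 + n - 1 = n := by omega
  rw [if_neg h2, h3]

lemma next_stutter (G : StSeq → Prop) (hG : CUS G) (t : StSeq) (m : ℕ) (hm : 1 ≤ m) :
    Next G (stutter t m) ↔ Next G t := by
  simp only [Next]
  rw [drop_stutter_lt t m 1 hm]
  exact (hG (drop 1 t) (m - 1)).symm

lemma up_stutter (G : StSeq → Prop) (hG : CUS G) (t : StSeq) (m : ℕ) (hm : 1 ≤ m) :
    Up G (stutter t m) ↔ Up G t := by
  simp only [Up, And', Not']
  rw [next_stutter G hG t m hm]
  exact and_congr (not_congr (hG t m).symm) Iff.rfl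

lemma up_stutter_zero (G : StSeq → Prop) (hG : CUS G) (t : StSeq) :
    ¬ Up G (stutter t 0) := by
  rintro ⟨h1, h2⟩
  simp only [Next, drop_one_stutter_zero] at h2
  exact h1 ((hG t 0).mp h2)

lemma until_stutter (φ ψ : StSeq → Prop)
    (hφ : ∀ t m, 1 ≤ m → (φ (stutter t m) ↔ φ t))
    (hφ0 : ∀ t, φ (stutter t 0))
    (hψ : ∀ t m, 1 ≤ m → (ψ (stutter t m) ↔ ψ t))
    (hψ0 : ∀ t, ¬ ψ (stutter t 0)) :
    CUS (Until' φ ψ) := by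
  intro s i
  constructor
  · rintro ⟨k, hk, hj⟩
    by_cases hki : k < i
    · refine ⟨k, ?_, ?_⟩
      · rw [drop_stutter_lt s i k hki.le]
        exact (hψ _ _ (by omega)).mpr hk
      · intro j hjk
        rw [drop_stutter_lt s i j (by omega)]
        exact (hφ _ _ (by omega)).mpr (hj j hjk)
    · refine ⟨k + 1, ?_, ?_⟩
      · rw [drop_stutter_gt s i (k + 1) (by omega)]
        simpa using hk
      · intro j hjk
        rcases lt_trichotomy j i with h | h | h
        · rw [drop_stutter_lt s i j h.le]
          exact (hφ _ _ (by omega)).mpr (hj j (by omega))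
        · subst h
          rw [drop_stutter_lt s j j le_rfl, Nat.sub_self]
          exact hφ0 (drop j s)
        · rw [drop_stutter_gt s i j h]
          exact hj (j - 1) (by omega)
  · rintro ⟨k, hk, hj⟩
    have hki : k ≠ i := by
      intro h; subst h
      rw [drop_stutter_lt s k k le_rfl, Nat.sub_self] at hk
      exact hψ0 _ hk
    by_cases hlt : k < i
    · refine ⟨k, ?_, ?_⟩
      · rw [drop_stutter_lt s i k hlt.le] at hk
        exact (hψ _ _ (by omega)).mp hk
      · intro j hjk
        have := hj j hjk
        rw [drop_stutter_lt s i j (by omega)] at this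
        exact (hφ _ _ (by omega)).mp this
    · refine ⟨k - 1, ?_, ?_⟩
      · rw [drop_stutter_gt s i k (by omega)] at hk
        exact hk
      · intro j hjk
        by_cases hji : j < i
        · have := hj j (by omega)
          rw [drop_stutter_lt s i j hji.le] at this
          exact (hφ _ _ (by omega)).mp this
        · have := hj (j + 1) (by omega)
          rw [drop_stutter_gt s i (j + 1) (by omega)] at this
          simpa using this

theorem prop3 (A B C D E F : StSeq → Prop) (hA : CUS A) (hB : CUS B) (hC : CUS C)
    (hD : CUS D) (hE : CUS E) (hF : CUS F) :
    CUS (Until' (Or' (Not' (Up A)) (Or' (Next B) C)) (And' (Up D) (And' (Next E) F))) := by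
  apply until_stutter
  · intro t m hm
    simp only [Or', Not']
    rw [up_stutter A hA t m hm, next_stutter B hB t m hm]
    exact or_congr Iff.rfl (or_congr Iff.rfl (hC t m).symm)
  · intro t
    exact Or.inl (up_stutter_zero A hA t)
  · intro t m hm
    simp only [And']
    rw [up_stutter D hD t m hm, next_stutter E hE t m hm]
    exact and_congr Iff.rfl (and_congr Iff.rfl (hF t m).symm)
  · rintro t ⟨h1, -⟩
    exact up_stutter_zero D hD t h1
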